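/- (Fully congested radial case: characterization of type T-T Braess' paradox.) Fix R ≥ 2, Q ∈ ℝ^R with Q_r > 0 for all r, ρ > 0, β̂ ∈ ℝ^R with β̂ ≥ 0, and c ∈ ℝ^R. For α̂ ∈ ℝ^R with α̂_r > 0 for all r, define ω_r(α̂) := 1/(α̂_r + ρ²Q_r), ω̃_r(α̂) := ω_r/∑_s ω_s, η(α̂) := (1 + ∑_s ω_s·c_s)/(∑_s ω_s), x_r(α̂) := ω_r·(η − c_r), and Φ_T(α̂) := ∑_r x_r(α̂)·(α̂_r·x_r(α̂) + β̂_r). Fix a point α̂⁰ with all α̂⁰_r > 0 and x_r(α̂⁰) > 0 for all r, and a route r. Then the partial derivative of Φ_T with respect to α̂_r at α̂⁰ exists, equals x_r·(x_r − ψ_r) where ψ_r := ω_r·(2α̂_r·x_r + β̂_r − ∑_{r'} ω̃_{r'}·(2α̂_{r'}·x_{r'} + β̂_{r'})) (all evaluated at α̂⁰), and is strictly negative if and only if x_r(α̂⁰) < ψ_r(α̂⁰). That is, type T-T Braess' paradox occurs when perturbing route r if and only if x_r < ψ_r. -/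

import Mathlib

lemma TT_aux {R : ℕ} (k b c a0 : Fin R → ℝ) (hk : ∀ s, 0 < a0 s + k s) (r : Fin R)
    (w : Fin R → ℝ) (hw : ∀ s, w s = (a0 s + k s)⁻¹)
    (S : ℝ) (hS : S = ∑ u, w u)
    (E : ℝ) (hE : E = (1 + ∑ u, w u * c u) / S)
    (X : Fin R → ℝ) (hX : ∀ s, X s = w s * (E - c s))
    (P : ℝ)
    (hP : P = X r * (X r - w r * (2 * a0 r * X r + b r -
      ∑ u, w u / S * (2 * a0 u * X u + b u)))) :
    HasDerivAt (fun t : ℝ =>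
      ∑ s, ((Function.update a0 r t s + k s)⁻¹ *
        ((1 + ∑ u, (Function.update a0 r t u + k u)⁻¹ * c u) /
          (∑ u, (Function.update a0 r t u + k u)⁻¹) - c s)) *
        (Function.update a0 r t s *
          ((Function.update a0 r t s + k s)⁻¹ *
          ((1 + ∑ u, (Function.update a0 r t u + k u)⁻¹ * c u) /
            (∑ u, (Function.update a0 r t u + k u)⁻¹) - c s)) + b s))
      P (a0 r) := by
  have hdne : ∀ s, a0 s + k s ≠ 0 := fun s => (hk s).ne'
  have hwpos : ∀ s, 0 < w s := fun s => by rw [hw]; exact inv_pos.mpr (hk s)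
  have hSpos : 0 < S := by
    rw [hS]; exact Finset.sum_pos (fun u _ => hwpos u) ⟨r, Finset.mem_univ r⟩
  have hSne : S ≠ 0 := hSpos.ne'
  -- derivative of each ω component
  have h1 : ∀ s, HasDerivAt (fun t : ℝ => (Function.update a0 r t s + k s)⁻¹)
      (if s = r then -(w r) ^ 2 else 0) (a0 r) := by
    intro s
    by_cases hs : s = r
    · subst hs
      simp only [if_pos rfl, Function.update_self, ↓reduceIte]
      have h := ((hasDerivAt_id (a0 s)).add_const (k s)).inv (hdne s)
      have h2 : -(w s) ^ 2 = -1 / (id (a0 s) + k s) ^ 2 := by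
        rw [hw]; field_simp; rfl
      rw [h2]
      exact h
    · simp only [Function.update_of_ne hs, if_neg hs]
      exact hasDerivAt_const _ _
  -- derivative of S(t)
  have hS' : HasDerivAt (fun t : ℝ => ∑ u, (Function.update a0 r t u + k u)⁻¹)
      (-(w r) ^ 2) (a0 r) := by
    have h := HasDerivAt.fun_sum (fun u (_ : u ∈ Finset.univ) => h1 u)
    simpa using h
  -- derivative of W(t)
  have hW' : HasDerivAt (fun t : ℝ => ∑ u, (Function.update a0 r t u + k u)⁻¹ * c u)
      (-(w r) ^ 2 * c r) (a0 r) := by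
    have h := HasDerivAt.fun_sum (fun u (_ : u ∈ Finset.univ) => (h1 u).mul_const (c u))
    simpa [ite_mul] using h
  have hSexp : (∑ u, (a0 u + k u)⁻¹) = S := by
    rw [hS]; exact Finset.sum_congr rfl fun u _ => (hw u).symm
  -- derivative of η(t)
  have hηd : HasDerivAt (fun t : ℝ =>
      (1 + ∑ u, (Function.update a0 r t u + k u)⁻¹ * c u) /
        (∑ u, (Function.update a0 r t u + k u)⁻¹))
      (w r * X r / S) (a0 r) := by
    have hne : (∑ u, (Function.update a0 r (a0 r) u + k u)⁻¹) ≠ 0 := by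
      simp only [Function.update_eq_self]
      rw [hSexp]; exact hSne
    have h := (hW'.const_add 1).fun_div hS' hne
    simp only [Function.update_eq_self] at h
    simp_rw [← hw] at h
    rw [← hS] at h
    refine h.congr_deriv ?_
    rw [hX, hE]
    field_simp
    ring
  -- derivative of x_s(t)
  have hXd : ∀ s, HasDerivAt (fun t : ℝ =>
      (Function.update a0 r t s + k s)⁻¹ *
        ((1 + ∑ u, (Function.update a0 r t u + k u)⁻¹ * c u) /
          (∑ u, (Function.update a0 r t u + k u)⁻¹) - c s))
      ((if s = r then -(w r) ^ 2 else 0) * (E - c s) + w s * (w r * X r / S)) (a0 r) := by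
    intro s
    have h := (h1 s).mul (hηd.sub_const (c s))
    simp only [Function.update_eq_self] at h
    simp_rw [← hw] at h
    rw [← hS, ← hE] at h
    exact h
  -- derivative of a_s(t)
  have hAd : ∀ s, HasDerivAt (fun t : ℝ => Function.update a0 r t s)
      (if s = r then (1:ℝ) else 0) (a0 r) := by
    intro s
    by_cases hs : s = r
    · subst hs
      simp only [Function.update_self, if_pos rfl, ↓reduceIte]
      exact hasDerivAt_id' _
    · simp only [Function.update_of_ne hs, if_neg hs]
      exact hasDerivAt_const _ _
  -- derivative of each summand of ΦT
  have hTd : ∀ s, HasDerivAt (fun t : ℝ =>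
      ((Function.update a0 r t s + k s)⁻¹ *
        ((1 + ∑ u, (Function.update a0 r t u + k u)⁻¹ * c u) /
          (∑ u, (Function.update a0 r t u + k u)⁻¹) - c s)) *
        (Function.update a0 r t s *
          ((Function.update a0 r t s + k s)⁻¹ *
          ((1 + ∑ u, (Function.update a0 r t u + k u)⁻¹ * c u) /
            (∑ u, (Function.update a0 r t u + k u)⁻¹) - c s)) + b s))
      (((if s = r then -(w r) ^ 2 else 0) * (E - c s) + w s * (w r * X r / S)) *
          (a0 s * X s + b s) +
        X s * ((if s = r then (1:ℝ) else 0) * X s +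
          a0 s * ((if s = r then -(w r) ^ 2 else 0) * (E - c s) + w s * (w r * X r / S))))
      (a0 r) := by
    intro s
    have h := (hXd s).fun_mul (((hAd s).fun_mul (hXd s)).add_const (b s))
    simp only [Function.update_eq_self] at h
    simp_rw [← hw] at h
    rw [← hS, ← hE] at h
    simp_rw [← hX] at h
    exact h
  have hΦd := HasDerivAt.fun_sum (fun s (_ : s ∈ Finset.univ) => hTd s)
  rw [hP]
  refine hΦd.congr_deriv ?_
  -- now the scalar identity
  have hterm : ∀ s,
      (((if s = r then -(w r) ^ 2 else 0) * (E - c s) + w s * (w r * X r / S)) *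
          (a0 s * X s + b s) +
        X s * ((if s = r then (1:ℝ) else 0) * X s +
          a0 s * ((if s = r then -(w r) ^ 2 else 0) * (E - c s) + w s * (w r * X r / S))))
      = (if s = r then X r ^ 2 - (w r) ^ 2 * (E - c r) * (2 * a0 r * X r + b r) else 0)
          + (w r * X r / S) * (w s * (2 * a0 s * X s + b s)) := by
    intro s
    by_cases hs : s = r
    · subst hs; simp only [eq_self_iff_true, if_true]; ring
    · simp only [if_neg hs]; ring
  rw [Finset.sum_congr rfl (fun s _ => hterm s), Finset.sum_add_distrib,
    Finset.sum_ite_eq' Finset.univ r, ← Finset.mul_sum]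
  simp only [Finset.mem_univ, if_pos]
  have hdiv : ∑ u, w u / S * (2 * a0 u * X u + b u)
      = (∑ u, w u * (2 * a0 u * X u + b u)) / S := by
    rw [Finset.sum_div]
    exact Finset.sum_congr rfl fun u _ => by rw [div_mul_eq_mul_div]
  rw [hdiv, hX r]
  field_simp
  ring


/-- Fully congested radial power network with non-overlapping active routes:
the partial derivative of the transportation social cost with respect to `α̂_r` equals
`x_r (x_r − ψ_r)`, and it is strictly negative (type T-T Braess' paradox when perturbing
route `r`) iff `x_r < ψ_r`. -/
theorem TT_fully_congested {R : ℕ} (hR : 2 ≤ R)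
    (Q : Fin R → ℝ) (hQ : ∀ r, 0 < Q r) (ρ : ℝ) (hρ : 0 < ρ)
    (bhat : Fin R → ℝ) (hb : ∀ r, 0 ≤ bhat r) (c : Fin R → ℝ)
    (a0 : Fin R → ℝ) (ha0 : ∀ r, 0 < a0 r) (r : Fin R) :
    let ω : (Fin R → ℝ) → Fin R → ℝ := fun a s => (a s + ρ ^ 2 * Q s)⁻¹
    let ωt : (Fin R → ℝ) → Fin R → ℝ := fun a s => ω a s / ∑ u, ω a u
    let η : (Fin R → ℝ) → ℝ := fun a => (1 + ∑ u, ω a u * c u) / ∑ u, ω a u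
    let x : (Fin R → ℝ) → Fin R → ℝ := fun a s => ω a s * (η a - c s)
    let ΦT : (Fin R → ℝ) → ℝ := fun a => ∑ s, x a s * (a s * x a s + bhat s)
    let ψ : (Fin R → ℝ) → Fin R → ℝ := fun a s =>
      ω a s * (2 * a s * x a s + bhat s - ∑ u, ωt a u * (2 * a u * x a u + bhat u))
    (∀ s, 0 < x a0 s) →
      HasDerivAt (fun t : ℝ => ΦT (Function.update a0 r t))
        (x a0 r * (x a0 r - ψ a0 r)) (a0 r) ∧
      (x a0 r * (x a0 r - ψ a0 r) < 0 ↔ x a0 r < ψ a0 r) := by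
  intro ω ωt η x ΦT ψ hx
  constructor
  · exact TT_aux (fun s => ρ ^ 2 * Q s) bhat c a0
      (fun s => by have := hQ s; have := ha0 s; positivity) r
      (ω a0) (fun s => rfl) (∑ u, ω a0 u) rfl (η a0) rfl (x a0) (fun s => rfl)
      (x a0 r * (x a0 r - ψ a0 r)) rfl
  · constructor <;> intro h <;> nlinarith [hx r]
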